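/- arXiv:0911.0644 — 2 statements merged into one kernel-verified Lean document; each statement's English description precedes it below -/
import Mathlib

section
/- (Main theorem) Let A be the ℝ-algebra of functions on ℝᵈ generated by the coordinate functions x₁,...,x_d and Borel measurable functions h₁,...,h_m. Let Q ⊆ A be a countably generated archimedean quadratic module possessing the moment property: every linear functional on A nonnegative on Q is represented by a positive Borel measure supported in P(Q). If f ∈ A satisfies f(x) > 0 for all x ∈ P(Q), then f ∈ Q. -/
open MeasureTheory

set_option maxHeartbeats 1000000
set_option synthInstance.maxHeartbeats 400000

/-- **Main theorem** (Putinar, Striktpositivstellensatz for measurable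
functions). Let `A = ℝ[x₁,…,x_d,h₁,…,h_m]` be the algebra of functions on ℝᵈ
generated by the coordinate functions and Borel measurable functions
`h₁,…,h_m`. Let `Q ⊆ A` be a countably generated archimedean quadratic module
with the moment property. If `f ∈ A` is (strictly) positive on `P(Q)`, then
`f ∈ Q`. -/
theorem measurable_striktpositivstellensatz {d m : ℕ}
    (h : Fin m → (Fin d → ℝ) → ℝ) (hh : ∀ j, Measurable (h j))
    (A : Subalgebra ℝ ((Fin d → ℝ) → ℝ))
    (hA : A = Algebra.adjoin ℝ
      ((Set.range fun i : Fin d => fun x : Fin d → ℝ => x i) ∪ Set.range h))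
    (Q : Set A)
    -- `Q` is a quadratic module:
    (hadd : ∀ a b : A, a ∈ Q → b ∈ Q → a + b ∈ Q)
    (hone : (1 : A) ∈ Q)
    (hsq : ∀ a q : A, q ∈ Q → a ^ 2 * q ∈ Q)
    -- `Q` is countably generated:
    (hgen : ∃ g : ℕ → A, Q = ⋂₀ {M : Set A |
        (∀ a b : A, a ∈ M → b ∈ M → a + b ∈ M) ∧
        (1 : A) ∈ M ∧
        (∀ a q : A, q ∈ M → a ^ 2 * q ∈ M) ∧
        (∀ n, g n ∈ M)})
    -- `Q` is archimedean:
    (harch : ∀ f : A, ∃ ε > (0:ℝ), ∀ t : ℝ, 0 ≤ t → t ≤ ε →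
        (1 : A) + t • f ∈ Q)
    -- `Q` has the moment property: every linear functional nonnegative on `Q`
    -- is represented by a positive Borel measure supported in `P(Q)`:
    (hmom : ∀ L : A →ₗ[ℝ] ℝ, (∀ q ∈ Q, 0 ≤ L q) →
      ∃ μ : Measure (Fin d → ℝ),
        μ {x : Fin d → ℝ | ∀ q ∈ Q, 0 ≤ (q : (Fin d → ℝ) → ℝ) x}ᶜ = 0 ∧
        ∀ g : A, Integrable (g : (Fin d → ℝ) → ℝ) μ ∧
          L g = ∫ x, (g : (Fin d → ℝ) → ℝ) x ∂μ)
    (f : A)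
    (hf : ∀ x ∈ {x : Fin d → ℝ | ∀ q ∈ Q, 0 ≤ (q : (Fin d → ℝ) → ℝ) x},
        0 < (f : (Fin d → ℝ) → ℝ) x) :
    f ∈ Q := by
  -- Q is closed under nonnegative scaling
  have hscale : ∀ t : ℝ, 0 ≤ t → ∀ q ∈ Q, t • q ∈ Q := by
    intro t ht q hq
    have := hsq (Real.sqrt t • 1) q hq
    rwa [smul_pow, one_pow, Real.sq_sqrt ht, smul_mul_assoc, one_mul] at this
  -- handle the case -1 ∈ Q : then Q = A
  by_cases hneg : (-1 : A) ∈ Q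
  · obtain ⟨ε, hε, hQ⟩ := harch f
    have h1 : (1 : A) + ε • f ∈ Q := hQ ε hε.le le_rfl
    have h2 : ε⁻¹ • ((1 : A) + ε • f) ∈ Q := hscale _ (by positivity) _ h1
    have h3 : ε⁻¹ • (-1 : A) ∈ Q := hscale _ (by positivity) _ hneg
    have := hadd _ _ h2 h3
    have heq : ε⁻¹ • ((1 : A) + ε • f) + ε⁻¹ • (-1 : A) = f := by
      rw [smul_add, smul_smul, inv_mul_cancel₀ hε.ne']
      simp
    rwa [heq] at this
  by_contra hfQ
  -- key: α • 1 + t • f ∈ Q with t ≥ 0 forces α ≥ 0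
  have hkey : ∀ α t : ℝ, 0 ≤ t → α • (1 : A) + t • f ∈ Q → 0 ≤ α := by
    intro α t ht hmem
    by_contra hα
    push_neg at hα
    rcases eq_or_lt_of_le ht with ht0 | ht0
    · rw [← ht0, zero_smul, add_zero] at hmem
      have h2 := hscale (-α)⁻¹ (inv_nonneg.2 (neg_nonneg.2 hα.le)) _ hmem
      rw [smul_smul] at h2
      have heq : (-α)⁻¹ * α = -1 := by rw [inv_neg, neg_mul, inv_mul_cancel₀ hα.ne]
      rw [heq, neg_smul, one_smul] at h2
      exact hneg h2
    · have h4 := hscale t⁻¹ (inv_nonneg.2 ht0.le) _ hmem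
      rw [smul_add, smul_smul, smul_smul, inv_mul_cancel₀ ht0.ne', one_smul] at h4
      have h5 : (-(t⁻¹ * α)) • (1 : A) ∈ Q :=
        hscale _ (neg_nonneg.2 (mul_nonpos_of_nonneg_of_nonpos (inv_nonneg.2 ht0.le) hα.le)) _ hone
      have h6 := hadd _ _ h4 h5
      rw [add_comm, ← add_assoc, ← add_smul, neg_add_cancel, zero_smul, zero_add] at h6
      exact hfQ h6
  -- the cone Q + ℝ≥0 • (-f)
  set C : ConvexCone ℝ A :=
    { carrier := {x | ∃ q ∈ Q, ∃ t : ℝ, 0 ≤ t ∧ x = q + t • (-f)}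
      smul_mem' := by
        rintro c hc x ⟨q, hq, t, ht, rfl⟩
        exact ⟨c • q, hscale c hc.le q hq, c * t, by positivity, by
          rw [smul_add, smul_smul]⟩
      add_mem' := by
        rintro x ⟨q, hq, t, ht, rfl⟩ y ⟨q', hq', t', ht', rfl⟩
        exact ⟨q + q', hadd _ _ hq hq', t + t', by positivity, by
          rw [add_smul]; abel⟩ } with hC
  have hone_ne : (1 : A) ≠ 0 := one_ne_zero
  obtain ⟨L, hL1, hLC⟩ := riesz_extension (C.toPointedCone ⟨0, by have := hscale 0 le_rfl _ hone; rwa [zero_smul] at this,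
    0, le_rfl, by rw [zero_smul, add_zero]⟩) (LinearPMap.mkSpanSingleton (1 : A) (1 : ℝ) hone_ne)
    (by
      rintro ⟨x, hx⟩ hxC
      rw [LinearPMap.domain_mkSpanSingleton, Submodule.mem_span_singleton] at hx
      obtain ⟨α, rfl⟩ := hx
      obtain ⟨q, hq, t, ht, hxe⟩ := hxC
      have hxe' : α • (1 : A) = q + t • -f := hxe
      have hqe : α • (1 : A) + t • f = q := by
        rw [hxe', smul_neg]; abel
      have hα : 0 ≤ α := hkey α t ht (by rw [hqe]; exact hq)
      have hval : (LinearPMap.mkSpanSingleton (1 : A) (1 : ℝ) hone_ne) ⟨α • 1, hx⟩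
          = α • (1 : ℝ) := LinearPMap.mkSpanSingleton'_apply _ _ _ α hx
      rw [hval]
      simpa using hα)
    (by
      intro y
      obtain ⟨ε, hε, hQ⟩ := harch y
      refine ⟨⟨ε⁻¹ • (1 : A), ?_⟩, ?_⟩
      · rw [LinearPMap.domain_mkSpanSingleton]
        exact Submodule.smul_mem _ _ (Submodule.mem_span_singleton_self _)
      refine ⟨ε⁻¹ • ((1 : A) + ε • y), hscale _ (by positivity) _ (hQ ε hε.le le_rfl), 0,
        le_rfl, ?_⟩
      rw [zero_smul, add_zero, smul_add, smul_smul, inv_mul_cancel₀ hε.ne', one_smul])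
  -- basic facts about L
  have hLQ : ∀ q ∈ Q, 0 ≤ L q := fun q hq =>
    hLC q ⟨q, hq, 0, le_rfl, by rw [zero_smul, add_zero]⟩
  have hL1' : L 1 = 1 := by
    have := hL1 ⟨(1 : A), Submodule.mem_span_singleton_self _⟩
    rwa [LinearPMap.mkSpanSingleton_apply] at this
  have hLf : L f ≤ 0 := by
    have h0Q : (0 : A) ∈ Q := by
      have := hscale 0 le_rfl _ hone; rwa [zero_smul] at this
    have := hLC (-f) ⟨0, h0Q, 1, zero_le_one, by rw [one_smul, zero_add]⟩
    rw [map_neg] at this; linarith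
  -- apply the moment property
  obtain ⟨μ, hμc, hμint⟩ := hmom L hLQ
  set K := {x : Fin d → ℝ | ∀ q ∈ Q, 0 ≤ (q : (Fin d → ℝ) → ℝ) x} with hK
  obtain ⟨hint1, heq1⟩ := hμint 1
  obtain ⟨hintf, heqf⟩ := hμint f
  -- μ(univ).toReal = 1
  have hcoe1 : ((1 : A) : (Fin d → ℝ) → ℝ) = fun _ => (1:ℝ) := rfl
  have huniv : (μ Set.univ).toReal = 1 := by
    rw [hL1', hcoe1] at heq1
    rw [integral_const, smul_eq_mul, mul_one] at heq1
    exact heq1.symm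
  have hfin : μ Set.univ ≠ ⊤ := by
    rw [hcoe1] at hint1
    rcases (integrable_const_iff).1 hint1 with h1 | h2
    · exact absurd h1 one_ne_zero
    · exact h2.measure_univ_lt_top.ne
  have hμuniv_pos : 0 < μ Set.univ := by
    rcases eq_or_lt_of_le (zero_le : 0 ≤ μ Set.univ) with h0 | h0
    · rw [← h0] at huniv; simp at huniv
    · exact h0
  -- μ K = μ univ > 0
  have hμK : μ K = μ Set.univ := by
    have hle : μ Set.univ ≤ μ K + μ Kᶜ := by
      rw [← Set.union_compl_self K]; exact measure_union_le _ _
    rw [hμc, add_zero] at hle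
    exact le_antisymm (measure_mono (Set.subset_univ _)) hle
  -- f ≥ 0 a.e.
  have haeK : ∀ᵐ x ∂μ, x ∈ K := by
    rw [ae_iff]
    exact measure_mono_null (fun x hx => hx) hμc
  have hae : 0 ≤ᵐ[μ] (f : (Fin d → ℝ) → ℝ) :=
    haeK.mono fun x hx => (hf x hx).le
  have hsupp : K ⊆ Function.support (f : (Fin d → ℝ) → ℝ) :=
    fun x hx => (hf x hx).ne'
  have hpos : 0 < ∫ x, (f : (Fin d → ℝ) → ℝ) x ∂μ :=
    (integral_pos_iff_support_of_nonneg_ae hae hintf).2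
      (lt_of_lt_of_le (hμK ▸ hμuniv_pos) (measure_mono hsupp))
  rw [← heqf] at hpos
  linarith
end

section
/- (Corollary) Let A = ℝ[x₁,...,x_d, h₁,...,h_m] with h_j Borel measurable on ℝᵈ, and let q₀ = 1 − (x₁²+...+x_d² + h₁²+...+h_m²) and q₁,...,qₙ ∈ A. Set P = {x ∈ ℝᵈ : qᵢ(x) ≥ 0, 0 ≤ i ≤ n}. If the quadratic module M = ΣA² + q₀ΣA² + ... + qₙΣA² has the moment property, then every f ∈ A with f > 0 on P belongs to M. -/
open MeasureTheory

set_option linter.unusedSectionVars false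
set_option maxHeartbeats 1000000
section QMAux

variable {R : Type*} [CommRing R] [Algebra ℝ R] {n : ℕ}

/-- The quadratic module generated by `q 0, …, q n`. -/
def QM (q : Fin (n + 1) → R) : Set R :=
  {a : R | ∃ s₀ : R, IsSumSq s₀ ∧ ∃ s : Fin (n + 1) → R,
    (∀ i, IsSumSq (s i)) ∧ a = s₀ + ∑ i, q i * s i}

variable {q : Fin (n + 1) → R}

theorem isSumSq_one' : IsSumSq (1 : R) := by
  have : (1 : R) = 1 * 1 + 0 := by ring
  rw [this]; exact IsSumSq.sq_add 1 IsSumSq.zero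

theorem IsSumSq.mul_self_mul {a s : R} (hs : IsSumSq s) : IsSumSq (a * a * s) := by
  induction hs with
  | zero => simpa using IsSumSq.zero
  | @sq_add b S hS ih =>
      have : a * a * (b * b + S) = (a * b) * (a * b) + a * a * S := by ring
      rw [this]
      exact IsSumSq.sq_add _ ih

theorem QM.add {a b : R} (ha : a ∈ QM q) (hb : b ∈ QM q) : a + b ∈ QM q := by
  obtain ⟨s₀, hs₀, s, hs, rfl⟩ := ha
  obtain ⟨t₀, ht₀, t, ht, rfl⟩ := hb
  refine ⟨s₀ + t₀, hs₀.add ht₀, fun i => s i + t i, fun i => (hs i).add (ht i), ?_⟩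
  simp only [mul_add, Finset.sum_add_distrib]
  ring

theorem QM.sumSq {a : R} (ha : IsSumSq a) : a ∈ QM q :=
  ⟨a, ha, 0, fun _ => IsSumSq.zero, by simp⟩

theorem QM.zero : (0 : R) ∈ QM q := QM.sumSq IsSumSq.zero

theorem QM.one : (1 : R) ∈ QM q := QM.sumSq isSumSq_one'

theorem QM.mul_self_mul {a m : R} (hm : m ∈ QM q) : a * a * m ∈ QM q := by
  obtain ⟨s₀, hs₀, s, hs, rfl⟩ := hm
  refine ⟨a * a * s₀, hs₀.mul_self_mul, fun i => a * a * s i,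
    fun i => (hs i).mul_self_mul, ?_⟩
  simp only [mul_add, Finset.mul_sum]
  congr 1
  exact Finset.sum_congr rfl fun i _ => by ring

theorem QM.smul {c : ℝ} (hc : 0 ≤ c) {m : R} (hm : m ∈ QM q) : c • m ∈ QM q := by
  have : c • m = algebraMap ℝ R (Real.sqrt c) * algebraMap ℝ R (Real.sqrt c) * m := by
    rw [← map_mul, Real.mul_self_sqrt hc, Algebra.smul_def]
  rw [this]
  exact QM.mul_self_mul hm

theorem QM.algebraMap_nonneg {c : ℝ} (hc : 0 ≤ c) : algebraMap ℝ R c ∈ QM q := by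
  simpa [Algebra.smul_def] using QM.smul hc (QM.one (q := q))

theorem QM.q_mem (i : Fin (n + 1)) : q i ∈ QM q := by
  classical
  refine ⟨0, IsSumSq.zero, fun j => if j = i then 1 else 0, fun j => ?_, ?_⟩
  · dsimp only
    split
    · exact isSumSq_one'
    · exact IsSumSq.zero
  · simp [mul_ite]

/-- If `N² - a² ∈ M` with `N > 0` then `N ± a ∈ M`. -/
theorem QM.bound_of_sq_bound {N : ℝ} (hN : 0 < N) {a : R}
    (h : algebraMap ℝ R (N ^ 2) - a * a ∈ QM q) :
    algebraMap ℝ R N + a ∈ QM q ∧ algebraMap ℝ R N - a ∈ QM q := by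
  have key : ∀ b : R, algebraMap ℝ R (N ^ 2) - b * b ∈ QM q →
      algebraMap ℝ R N + b ∈ QM q := by
    intro b hb
    have h1 : (2 * N) • (algebraMap ℝ R N + b)
        = (algebraMap ℝ R N + b) * (algebraMap ℝ R N + b)
          + (algebraMap ℝ R (N ^ 2) - b * b) := by
      simp only [Algebra.smul_def, map_mul, map_pow, map_ofNat]
      ring
    have h2 : ((2 * N)⁻¹ • ((2 * N) • (algebraMap ℝ R N + b))) ∈ QM q := by
      rw [h1]
      refine QM.smul (by positivity) (QM.add (QM.sumSq ?_) hb)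
      have : (algebraMap ℝ R N + b) * (algebraMap ℝ R N + b)
          = (algebraMap ℝ R N + b) * (algebraMap ℝ R N + b) + 0 := by ring
      rw [this]; exact IsSumSq.sq_add _ IsSumSq.zero
    rwa [smul_smul, inv_mul_cancel₀ (by positivity), one_smul] at h2
  refine ⟨key a h, ?_⟩
  have := key (-a) (by simpa using h)
  simpa [sub_eq_add_neg] using this

/-- If `N ± a ∈ M` with `N > 0` then `N² - a² ∈ M`. -/
theorem QM.sq_bound_of_bound {N : ℝ} (hN : 0 < N) {a : R}
    (h1 : algebraMap ℝ R N + a ∈ QM q) (h2 : algebraMap ℝ R N - a ∈ QM q) :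
    algebraMap ℝ R (N ^ 2) - a * a ∈ QM q := by
  have key : (2 * N) • (algebraMap ℝ R (N ^ 2) - a * a)
      = (algebraMap ℝ R N + a) * (algebraMap ℝ R N + a) * (algebraMap ℝ R N - a)
        + (algebraMap ℝ R N - a) * (algebraMap ℝ R N - a) * (algebraMap ℝ R N + a) := by
    simp only [Algebra.smul_def, map_mul, map_pow, map_ofNat]
    ring
  have h3 : ((2 * N)⁻¹ • ((2 * N) • (algebraMap ℝ R (N ^ 2) - a * a))) ∈ QM q := by
    rw [key]
    exact QM.smul (by positivity) (QM.add (QM.mul_self_mul h2) (QM.mul_self_mul h1))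
  rwa [smul_smul, inv_mul_cancel₀ (by positivity), one_smul] at h3

end QMAux

/-- Archimedean property of the quadratic module, bootstrapped from the generators. -/
theorem qm_arch {F : Type*} [CommRing F] [Algebra ℝ F] {S : Set F} {n : ℕ}
    {q : Fin (n + 1) → ↥(Algebra.adjoin ℝ S)}
    (hgen : ∀ g (hg : g ∈ S),
      (1 : ↥(Algebra.adjoin ℝ S)) - ⟨g, Algebra.subset_adjoin hg⟩ * ⟨g, Algebra.subset_adjoin hg⟩
        ∈ QM q) :
    ∀ a : ↥(Algebra.adjoin ℝ S), ∃ N : ℝ, 0 < N ∧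
      algebraMap ℝ _ N + a ∈ QM q ∧ algebraMap ℝ _ N - a ∈ QM q := by
  rintro ⟨x, hx⟩
  induction hx using Algebra.adjoin_induction with
  | mem g hg =>
      have h1 : algebraMap ℝ ↥(Algebra.adjoin ℝ S) ((1:ℝ) ^ 2)
          - (⟨g, Algebra.subset_adjoin hg⟩ : ↥(Algebra.adjoin ℝ S))
          * ⟨g, Algebra.subset_adjoin hg⟩ ∈ QM q := by
        simpa using hgen g hg
      obtain ⟨hp, hm⟩ := QM.bound_of_sq_bound one_pos h1
      exact ⟨1, one_pos, hp, hm⟩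
  | algebraMap r =>
      have hcast : (⟨algebraMap ℝ F r, Subalgebra.algebraMap_mem _ r⟩ : ↥(Algebra.adjoin ℝ S))
          = algebraMap ℝ ↥(Algebra.adjoin ℝ S) r := Subtype.ext (by simp)
      refine ⟨|r| + 1, by positivity, ?_, ?_⟩
      · rw [hcast, ← map_add]
        exact QM.algebraMap_nonneg (by cases abs_cases r <;> linarith)
      · rw [hcast, ← map_sub]
        exact QM.algebraMap_nonneg (by cases abs_cases r <;> linarith)
  | add x y hxa hya ihx ihy =>
      obtain ⟨N₁, hN₁, hp₁, hm₁⟩ := ihx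
      obtain ⟨N₂, hN₂, hp₂, hm₂⟩ := ihy
      refine ⟨N₁ + N₂, by positivity, ?_, ?_⟩
      · have heq : algebraMap ℝ ↥(Algebra.adjoin ℝ S) (N₁ + N₂)
            + (⟨x + y, add_mem hxa hya⟩ : ↥(Algebra.adjoin ℝ S))
            = (algebraMap ℝ _ N₁ + ⟨x, hxa⟩) + (algebraMap ℝ _ N₂ + ⟨y, hya⟩) := by
          rw [map_add]
          exact Subtype.ext (by simp; ring)
        rw [heq]; exact QM.add hp₁ hp₂
      · have heq : algebraMap ℝ ↥(Algebra.adjoin ℝ S) (N₁ + N₂)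
            - (⟨x + y, add_mem hxa hya⟩ : ↥(Algebra.adjoin ℝ S))
            = (algebraMap ℝ _ N₁ - ⟨x, hxa⟩) + (algebraMap ℝ _ N₂ - ⟨y, hya⟩) := by
          rw [map_add]
          exact Subtype.ext (by simp; ring)
        rw [heq]; exact QM.add hm₁ hm₂
  | mul x y hxa hya ihx ihy =>
      obtain ⟨N₁, hN₁, hp₁, hm₁⟩ := ihx
      obtain ⟨N₂, hN₂, hp₂, hm₂⟩ := ihy
      have hs₁ := QM.sq_bound_of_bound hN₁ hp₁ hm₁
      have hs₂ := QM.sq_bound_of_bound hN₂ hp₂ hm₂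
      set X : ↥(Algebra.adjoin ℝ S) := ⟨x, hxa⟩
      set Y : ↥(Algebra.adjoin ℝ S) := ⟨y, hya⟩
      have key : algebraMap ℝ ↥(Algebra.adjoin ℝ S) ((N₁ * N₂) ^ 2) - (X * Y) * (X * Y)
          = X * X * (algebraMap ℝ _ (N₂ ^ 2) - Y * Y)
            + (N₁ ^ 2) • (algebraMap ℝ _ (N₂ ^ 2) - Y * Y)
            + (N₂ ^ 2) • (algebraMap ℝ _ (N₁ ^ 2) - X * X)
            - (N₁ ^ 2) • (algebraMap ℝ _ (N₂ ^ 2) - Y * Y) := by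
        simp only [Algebra.smul_def, map_mul, map_pow]
        ring
      have key2 : algebraMap ℝ ↥(Algebra.adjoin ℝ S) ((N₁ * N₂) ^ 2) - (X * Y) * (X * Y)
          = X * X * (algebraMap ℝ _ (N₂ ^ 2) - Y * Y)
            + (N₂ ^ 2) • (algebraMap ℝ _ (N₁ ^ 2) - X * X) := by
        rw [key]; abel
      have hmem : algebraMap ℝ ↥(Algebra.adjoin ℝ S) ((N₁ * N₂) ^ 2) - (X * Y) * (X * Y)
          ∈ QM q := by
        rw [key2]
        exact QM.add (QM.mul_self_mul hs₂) (QM.smul (sq_nonneg _) hs₁)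
      obtain ⟨hp, hm⟩ := QM.bound_of_sq_bound (by positivity : (0:ℝ) < N₁ * N₂) hmem
      have hXY : (⟨x * y, mul_mem hxa hya⟩ : ↥(Algebra.adjoin ℝ S)) = X * Y := Subtype.ext rfl
      exact ⟨N₁ * N₂, by positivity, by rw [hXY]; exact hp, by rw [hXY]; exact hm⟩


/-- **Corollary.** In `A = ℝ[x₁,…,x_d,h₁,…,h_m]`, with
`q₀ = 1 - (∑ xᵢ² + ∑ hⱼ²)` and `q₁,…,qₙ ∈ A`, if the finitely generated
quadratic module `M = ΣA² + q₀ΣA² + ⋯ + qₙΣA²` has the moment property, then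
every `f ∈ A` positive on `P = {x | qᵢ(x) ≥ 0, 0 ≤ i ≤ n}` lies in `M`. -/
theorem measurable_striktpositivstellensatz_corollary {d m n : ℕ}
    (h : Fin m → (Fin d → ℝ) → ℝ) (hh : ∀ j, Measurable (h j))
    (A : Subalgebra ℝ ((Fin d → ℝ) → ℝ))
    (hA : A = Algebra.adjoin ℝ
      ((Set.range fun i : Fin d => fun x : Fin d → ℝ => x i) ∪ Set.range h))
    (q : Fin (n + 1) → A)
    (hq0 : ((q 0 : A) : (Fin d → ℝ) → ℝ) =
      fun x : Fin d → ℝ => 1 - (∑ i, (x i) ^ 2 + ∑ j, (h j x) ^ 2))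
    -- `M = ΣA² + q₀ΣA² + ⋯ + qₙΣA²`
    (M : Set A)
    (hM : M = {a : A | ∃ s₀ : A, IsSumSq s₀ ∧ ∃ s : Fin (n + 1) → A,
        (∀ i, IsSumSq (s i)) ∧ a = s₀ + ∑ i, q i * s i})
    -- `M` has the moment property:
    (hmom : ∀ L : A →ₗ[ℝ] ℝ, (∀ g ∈ M, 0 ≤ L g) →
      ∃ μ : Measure (Fin d → ℝ),
        μ {x : Fin d → ℝ | ∀ i, 0 ≤ ((q i : A) : (Fin d → ℝ) → ℝ) x}ᶜ = 0 ∧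
        ∀ g : A, Integrable (g : (Fin d → ℝ) → ℝ) μ ∧
          L g = ∫ x, (g : (Fin d → ℝ) → ℝ) x ∂μ)
    (f : A)
    (hf : ∀ x ∈ {x : Fin d → ℝ | ∀ i, 0 ≤ ((q i : A) : (Fin d → ℝ) → ℝ) x},
        0 < (f : (Fin d → ℝ) → ℝ) x) :
    f ∈ M := by
  classical
  have hMQ : M = QM q := hM
  subst hA
  -- the generators as elements of the algebra
  set ξ : Fin d → ↥(Algebra.adjoin ℝ ((Set.range fun i : Fin d => fun x : Fin d → ℝ => x i) ∪ Set.range h)) := fun i =>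
    ⟨fun x => x i, Algebra.subset_adjoin (Or.inl ⟨i, rfl⟩)⟩ with hξ
  set η : Fin m → ↥(Algebra.adjoin ℝ ((Set.range fun i : Fin d => fun x : Fin d → ℝ => x i) ∪ Set.range h)) := fun j =>
    ⟨h j, Algebra.subset_adjoin (Or.inr ⟨j, rfl⟩)⟩ with hη
  have hq0' : q 0 = 1 - (∑ i, ξ i * ξ i + ∑ j, η j * η j) := by
    refine Subtype.ext (funext fun x => ?_)
    have hx := congrFun hq0 x
    simp only [Subalgebra.coe_sub, OneMemClass.coe_one, AddMemClass.coe_add,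
      AddSubmonoidClass.coe_finset_sum, MulMemClass.coe_mul, Pi.sub_apply, Pi.add_apply,
      Pi.one_apply, Pi.mul_apply, Finset.sum_apply, hξ, hη]
    rw [hx]
    congr 1
    congr 1
    · exact Finset.sum_congr rfl fun i _ => by rw [sq]
    · exact Finset.sum_congr rfl fun j _ => by rw [sq]
  -- generators satisfy `1 - g² ∈ M`
  have hgen : ∀ g (hg : g ∈ ((Set.range fun i : Fin d => fun x : Fin d → ℝ => x i) ∪ Set.range h : Set ((Fin d → ℝ) → ℝ))),
      (1 : ↥(Algebra.adjoin ℝ ((Set.range fun i : Fin d => fun x : Fin d → ℝ => x i) ∪ Set.range h))) - ⟨g, Algebra.subset_adjoin hg⟩ * ⟨g, Algebra.subset_adjoin hg⟩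
        ∈ QM q := by
    rintro g (⟨i, rfl⟩ | ⟨j, rfl⟩)
    · have hξi : (⟨fun x => x i, Algebra.subset_adjoin (Or.inl ⟨i, rfl⟩)⟩ :
          ↥(Algebra.adjoin ℝ ((Set.range fun i : Fin d => fun x : Fin d → ℝ => x i) ∪ Set.range h))) = ξ i := rfl
      have hkey : (1 : ↥(Algebra.adjoin ℝ ((Set.range fun i : Fin d => fun x : Fin d → ℝ => x i) ∪ Set.range h))) - ξ i * ξ i
          = q 0 + ((∑ i' ∈ Finset.univ.erase i, ξ i' * ξ i') + ∑ j, η j * η j) := by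
        rw [hq0', ← Finset.sum_erase_add Finset.univ (fun i' => ξ i' * ξ i') (Finset.mem_univ i)]
        ring
      rw [show (⟨(fun x => x i : (Fin d → ℝ) → ℝ), Algebra.subset_adjoin (Or.inl ⟨i, rfl⟩)⟩ :
          ↥(Algebra.adjoin ℝ ((Set.range fun i : Fin d => fun x : Fin d → ℝ => x i) ∪ Set.range h))) = ξ i from rfl, hkey]
      exact QM.add (QM.q_mem 0)
        (QM.sumSq ((IsSumSq.sum_mul_self _ _).add (IsSumSq.sum_mul_self _ _)))
    · have hkey : (1 : ↥(Algebra.adjoin ℝ ((Set.range fun i : Fin d => fun x : Fin d → ℝ => x i) ∪ Set.range h))) - η j * η j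
          = q 0 + ((∑ i, ξ i * ξ i) + ∑ j' ∈ Finset.univ.erase j, η j' * η j') := by
        rw [hq0', ← Finset.sum_erase_add Finset.univ (fun j' => η j' * η j') (Finset.mem_univ j)]
        ring
      rw [show (⟨h j, Algebra.subset_adjoin (Or.inr ⟨j, rfl⟩)⟩ :
          ↥(Algebra.adjoin ℝ ((Set.range fun i : Fin d => fun x : Fin d → ℝ => x i) ∪ Set.range h))) = η j from rfl, hkey]
      exact QM.add (QM.q_mem 0)
        (QM.sumSq ((IsSumSq.sum_mul_self _ _).add (IsSumSq.sum_mul_self _ _)))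
  have arch := qm_arch hgen
  rw [hMQ]
  by_contra hfM
  -- the separating cone
  set C : ConvexCone ℝ ↥(Algebra.adjoin ℝ ((Set.range fun i : Fin d => fun x : Fin d → ℝ => x i) ∪ Set.range h)) :=
    { carrier := {x | ∃ mm ∈ QM q, ∃ t : ℝ, 0 ≤ t ∧ x = mm - t • f}
      smul_mem' := by
        rintro c hc x ⟨mm, hmm, t, ht, rfl⟩
        exact ⟨c • mm, QM.smul hc.le hmm, c * t, by positivity, by
          rw [smul_sub, smul_smul]⟩
      add_mem' := by
        rintro x ⟨mm, hmm, t, ht, rfl⟩ y ⟨mm', hmm', t', ht', rfl⟩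
        exact ⟨mm + mm', QM.add hmm hmm', t + t', by positivity, by
          rw [add_smul]; abel⟩ } with hC
  have hMC : ∀ mm ∈ QM q, mm ∈ C := fun mm hmm => ⟨mm, hmm, 0, le_rfl, by simp⟩
  have hnegf : -f ∈ C := ⟨0, QM.zero, 1, zero_le_one, by simp⟩
  have hC1 : (-1 : ↥(Algebra.adjoin ℝ ((Set.range fun i : Fin d => fun x : Fin d → ℝ => x i) ∪ Set.range h))) ∈ C → False := by
    rintro ⟨mm, hmm, t, ht, heq⟩
    rcases ht.lt_or_eq with htpos | ht0
    · have h2 : mm + 1 = t • f := by rw [sub_eq_iff_eq_add.mp heq.symm]; abel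
      have hfQ : f ∈ QM q := by
        have : f = t⁻¹ • (mm + 1) := by
          rw [h2, smul_smul, inv_mul_cancel₀ htpos.ne', one_smul]
        rw [this]
        exact QM.smul (by positivity) (QM.add hmm QM.one)
      exact hfM hfQ
    · have hneg1 : (-1 : ↥(Algebra.adjoin ℝ ((Set.range fun i : Fin d => fun x : Fin d → ℝ => x i) ∪ Set.range h))) ∈ QM q := by
        rw [heq, ← ht0]; simpa using hmm
      obtain ⟨N, hN, hNf, -⟩ := arch f
      have : f = (algebraMap ℝ _ N + f) + N • (-1 : ↥(Algebra.adjoin ℝ ((Set.range fun i : Fin d => fun x : Fin d → ℝ => x i) ∪ Set.range h))) := by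
        rw [smul_neg, Algebra.smul_def, mul_one]; ring
      rw [this] at hfM
      exact hfM (QM.add hNf (QM.smul hN.le hneg1))
  -- the base functional on `ℝ ∙ 1`
  have h1ne : ∀ c : ℝ, c • (1 : ↥(Algebra.adjoin ℝ ((Set.range fun i : Fin d => fun x : Fin d → ℝ => x i) ∪ Set.range h))) = 0 → c • (1 : ℝ) = 0 := by
    intro c hc
    have := congrFun (congrArg Subtype.val hc) (fun _ => 0)
    simp at this
    simp [this]
  set f₀ := LinearPMap.mkSpanSingleton' (σ := RingHom.id ℝ) (1 : ↥(Algebra.adjoin ℝ ((Set.range fun i : Fin d => fun x : Fin d → ℝ => x i) ∪ Set.range h))) (1 : ℝ) h1ne with hf₀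
  have hdom : f₀.domain = ℝ ∙ (1 : ↥(Algebra.adjoin ℝ ((Set.range fun i : Fin d => fun x : Fin d → ℝ => x i) ∪ Set.range h))) := rfl
  have hnonneg : ∀ x : f₀.domain, (x : ↥(Algebra.adjoin ℝ ((Set.range fun i : Fin d => fun x : Fin d → ℝ => x i) ∪ Set.range h))) ∈ C → 0 ≤ f₀ x := by
    rintro ⟨x, hx⟩ hxC
    obtain ⟨c, hc⟩ := Submodule.mem_span_singleton.mp hx
    have hxe : (⟨x, hx⟩ : f₀.domain) = ⟨c • 1, hc ▸ hx⟩ := Subtype.ext hc.symm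
    rw [hxe, LinearPMap.mkSpanSingleton'_apply]
    simp only [smul_eq_mul, mul_one, RingHom.id_apply]
    by_contra hcneg
    push_neg at hcneg
    have hx' : c • (1 : ↥(Algebra.adjoin ℝ ((Set.range fun i : Fin d => fun x : Fin d → ℝ => x i) ∪ Set.range h))) ∈ C := hc ▸ hxC
    have := C.smul_mem (show (0:ℝ) < (-c)⁻¹ from inv_pos.mpr (by linarith)) hx'
    rw [smul_smul, show (-c)⁻¹ * c = -1 by
      rw [inv_mul_eq_div, div_eq_iff (show (-c) ≠ 0 by linarith)]; ring] at this
    rw [show (-1 : ℝ) • (1 : ↥(Algebra.adjoin ℝ ((Set.range fun i : Fin d => fun x : Fin d → ℝ => x i) ∪ Set.range h))) = -1 by simp] at this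
    exact hC1 this
  have hdense : ∀ y, ∃ x : f₀.domain, (x : ↥(Algebra.adjoin ℝ ((Set.range fun i : Fin d => fun x : Fin d → ℝ => x i) ∪ Set.range h))) + y ∈ C := by
    intro y
    obtain ⟨N, hN, hNy, -⟩ := arch y
    refine ⟨⟨algebraMap ℝ _ N, Submodule.mem_span_singleton.mpr
      ⟨N, by rw [Algebra.smul_def, mul_one]⟩⟩, hMC _ hNy⟩
  obtain ⟨L, hLf₀, hLC⟩ := riesz_extension (C.toPointedCone (hMC 0 QM.zero)) f₀ hnonneg hdense
  have hL1 : L 1 = 1 := by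
    have h1mem : (1 : ↥(Algebra.adjoin ℝ ((Set.range fun i : Fin d => fun x : Fin d → ℝ => x i) ∪ Set.range h))) ∈ f₀.domain :=
      Submodule.mem_span_singleton.mpr ⟨1, one_smul _ _⟩
    have := hLf₀ ⟨1, h1mem⟩
    rwa [LinearPMap.mkSpanSingleton'_apply_self] at this
  have hLM : ∀ g ∈ M, 0 ≤ L g := fun g hg => hLC g (hMC g (hMQ ▸ hg))
  have hLf : L f ≤ 0 := by
    have := hLC (-f) hnegf
    rw [map_neg] at this
    linarith
  obtain ⟨μ, hμP, hint⟩ := hmom L hLM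
  have h1int := hint 1
  have hfint := hint f
  have hμuniv : (μ Set.univ).toReal = 1 := by
    have := h1int.2
    rw [hL1] at this
    simpa [OneMemClass.coe_one, integral_const, measureReal_def] using this.symm
  have hμuniv_ne : μ Set.univ ≠ 0 := by
    intro h0
    rw [h0] at hμuniv
    simp at hμuniv
  have hae : 0 ≤ᵐ[μ] fun x => (f : (Fin d → ℝ) → ℝ) x := by
    rw [Filter.EventuallyLE, ae_iff]
    refine measure_mono_null (fun x hx => ?_) hμP
    simp only [Set.mem_setOf_eq, Pi.zero_apply, not_le] at hx
    simp only [Set.mem_compl_iff, Set.mem_setOf_eq]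
    intro hxP
    exact absurd (hf x hxP) (by linarith)
  have hsuppc : μ (Function.support fun x => (f : (Fin d → ℝ) → ℝ) x)ᶜ = 0 := by
    refine measure_mono_null (fun x hx => ?_) hμP
    simp only [Set.mem_compl_iff, Set.mem_setOf_eq] at hx ⊢
    intro hxP
    have hx0 : (f : (Fin d → ℝ) → ℝ) x = 0 := not_not.mp hx
    exact absurd (hf x hxP) (by rw [hx0]; exact lt_irrefl 0)
  have hsupp_pos : 0 < μ (Function.support fun x => (f : (Fin d → ℝ) → ℝ) x) := by
    rw [pos_iff_ne_zero]
    intro h0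
    apply hμuniv_ne
    have : μ Set.univ ≤ μ (Function.support fun x => (f : (Fin d → ℝ) → ℝ) x)
        + μ (Function.support fun x => (f : (Fin d → ℝ) → ℝ) x)ᶜ := by
      rw [← Set.union_compl_self (Function.support fun x => (f : (Fin d → ℝ) → ℝ) x)]
      exact measure_union_le _ _
    rw [h0, hsuppc, add_zero] at this
    exact le_antisymm this bot_le
  have hpos : 0 < ∫ x, (f : (Fin d → ℝ) → ℝ) x ∂μ :=
    (integral_pos_iff_support_of_nonneg_ae hae hfint.1).mpr hsupp_pos
  rw [← hfint.2] at hpos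
  linarith
end
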